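/- Let X be a geodesic metric space and let Z be a closed, unbounded subset of X. If Z is recurrent, then Z is Morse: for every L ≥ 1 and A ≥ 0, the quantity μ(L,A) := sup_γ sup_{w ∈ γ} d(w,Z), where the first supremum is over (L,A)-quasi-geodesic segments γ with both endpoints on Z, is finite. -/

import Mathlib

open Metric Set

section Defs

variable {X : Type*} [MetricSpace X]

/-- A unit-speed geodesic segment from `p` to `q`, parameterized on `[0, dist p q]`. -/
def IsGeodesicFrom (γ : ℝ → X) (p q : X) : Prop :=
  γ 0 = p ∧ γ (dist p q) = q ∧
    ∀ s ∈ Set.Icc (0 : ℝ) (dist p q), ∀ t ∈ Set.Icc (0 : ℝ) (dist p q),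
      dist (γ s) (γ t) = |s - t|

/-- A geodesic metric space: every pair of points is joined by a geodesic segment. -/
def IsGeodesicSpace (X : Type*) [MetricSpace X] : Prop :=
  ∀ p q : X, ∃ γ : ℝ → X, IsGeodesicFrom γ p q

/-- CAT(0): a geodesic space in which every geodesic triangle satisfies the comparison
inequality; equivalently (and as formalized here), for every geodesic `γ` from `p` to `q`
and every point `x`, the distance from `x` to a point of `γ` is bounded by the distance
between the corresponding points of a comparison triangle in the Euclidean plane:
`d(x, γ t)² ≤ (1 - t/d)·d(x,p)² + (t/d)·d(x,q)² - (t/d)(1 - t/d)·d²` where `d = d(p,q)`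
(written below multiplied through by `d` to avoid division). -/
def IsCAT0Space (X : Type*) [MetricSpace X] : Prop :=
  IsGeodesicSpace X ∧
    ∀ p q : X, ∀ γ : ℝ → X, IsGeodesicFrom γ p q → ∀ x : X,
      ∀ t ∈ Set.Icc (0 : ℝ) (dist p q),
        dist x (γ t) ^ 2 * dist p q ≤
          (dist p q - t) * dist x p ^ 2 + t * dist x q ^ 2 - t * (dist p q - t) * dist p q

/-- The nearest-point projection `π_Z(x) = {z ∈ Z | d(x,z) = d(x,Z)}`. -/
def projSet (Z : Set X) (x : X) : Set X := {z ∈ Z | dist x z = Metric.infDist x Z}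

/-- An `(L,A)`-quasi-geodesic segment defined on `[a,b]`. -/
def IsQuasiGeodesicOn (L A a b : ℝ) (γ : ℝ → X) : Prop :=
  a ≤ b ∧ ∀ s ∈ Set.Icc a b, ∀ t ∈ Set.Icc a b,
    |s - t| / L - A ≤ dist (γ s) (γ t) ∧ dist (γ s) (γ t) ≤ L * |s - t| + A

/-- `Z` is Morse: for all `L ≥ 1`, `A ≥ 0` there is a bound `M = μ(L,A)` on the distance
to `Z` of points on `(L,A)`-quasi-geodesic segments with both endpoints on `Z`. -/
def IsMorse (Z : Set X) : Prop :=
  ∀ L : ℝ, 1 ≤ L → ∀ A : ℝ, 0 ≤ A → ∃ M : ℝ,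
    ∀ a b : ℝ, ∀ γ : ℝ → X, IsQuasiGeodesicOn L A a b γ → γ a ∈ Z → γ b ∈ Z →
      ∀ s ∈ Set.Icc a b, Metric.infDist (γ s) Z ≤ M

/-- `Z` with the open balls of radius `d(z,z')/3` about `z` and `z'` removed. -/
def recRemoved (Z : Set X) (z z' : X) : Set X :=
  Z \ (Metric.ball z (dist z z' / 3) ∪ Metric.ball z' (dist z z' / 3))

/-- `Z` is `ρ`-recurrent: for every `q ≥ 1`, every rectifiable segment `γ` with endpoints
`z, z' ∈ Z` and `len(γ) ≤ q · d(z,z')` comes within distance `ρ(q)` of `Z'`, where `Z'` is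
`Z` with the open balls of radius `d(z,z')/3` about the endpoints removed.  (Distance to
`Z'` is measured by `infEdist`, which is `∞` when `Z'` is empty, matching
`inf ∅ = ∞` in the definition of `ρ`.) -/
def IsRecurrentWith (Z : Set X) (ρ : ℝ → ℝ) : Prop :=
  ∀ q : ℝ, 1 ≤ q → ∀ a b : ℝ, a ≤ b → ∀ γ : ℝ → X,
    ContinuousOn γ (Set.Icc a b) → γ a ∈ Z → γ b ∈ Z →
    eVariationOn γ (Set.Icc a b) ≤ ENNReal.ofReal (q * dist (γ a) (γ b)) →
    ∃ s ∈ Set.Icc a b,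
      EMetric.infEdist (γ s) (recRemoved Z (γ a) (γ b)) ≤ ENNReal.ofReal (ρ q)

/-- `Z` is recurrent: `ρ(q) < ∞` for every `q ≥ 1`, i.e. some real-valued function `ρ`
witnesses recurrence. -/
def IsRecurrent (Z : Set X) : Prop := ∃ ρ : ℝ → ℝ, IsRecurrentWith Z ρ

/-- `Z` is contracting with gauge `σ`: `σ(r)` bounds `diam(π_Z(x) ∪ π_Z(y))` whenever
`d(x,y) ≤ d(x,Z) ≤ r`, and `σ(r)/r → 0` as `r → ∞`. -/
def IsContractingWith (Z : Set X) (σ : ℝ → ℝ) : Prop :=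
  (∀ r : ℝ, 0 ≤ r → ∀ x y : X, dist x y ≤ Metric.infDist x Z → Metric.infDist x Z ≤ r →
      ∀ p ∈ projSet Z x ∪ projSet Z y, ∀ p' ∈ projSet Z x ∪ projSet Z y,
        dist p p' ≤ σ r) ∧
    Filter.Tendsto (fun r => σ r / r) Filter.atTop (nhds 0)

/-- `Z` is contracting: there is a sublinear contraction gauge. -/
def IsContracting (Z : Set X) : Prop := ∃ σ : ℝ → ℝ, IsContractingWith Z σ

/-- `Z` is strongly contracting: a single constant `C ≥ 0` bounds
`diam(π_Z(x) ∪ π_Z(y))` whenever `d(x,y) ≤ d(x,Z)`. -/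
def IsStronglyContracting (Z : Set X) : Prop :=
  ∃ C : ℝ, 0 ≤ C ∧ ∀ x y : X, dist x y ≤ Metric.infDist x Z →
    ∀ p ∈ projSet Z x ∪ projSet Z y, ∀ p' ∈ projSet Z x ∪ projSet Z y, dist p p' ≤ C

/-- `X` is `δ`-hyperbolic: every geodesic triangle is `δ`-thin, i.e. each side lies in the
`δ`-neighborhood of the union of the other two sides. -/
def IsDeltaHyperbolic (X : Type*) [MetricSpace X] (δ : ℝ) : Prop :=
  ∀ x y z : X, ∀ γ₁ γ₂ γ₃ : ℝ → X,
    IsGeodesicFrom γ₁ x y → IsGeodesicFrom γ₂ y z → IsGeodesicFrom γ₃ x z →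
    ∀ t ∈ Set.Icc (0 : ℝ) (dist x y),
      Metric.infDist (γ₁ t)
        (γ₂ '' Set.Icc (0 : ℝ) (dist y z) ∪ γ₃ '' Set.Icc (0 : ℝ) (dist x z)) ≤ δ

/-- `Z` is quasi-convex: every geodesic segment with both endpoints in `Z` lies in the
`C`-neighborhood of `Z`, for some `C ≥ 0`. -/
def IsQuasiConvex (Z : Set X) : Prop :=
  ∃ C : ℝ, 0 ≤ C ∧ ∀ p ∈ Z, ∀ q ∈ Z, ∀ γ : ℝ → X, IsGeodesicFrom γ p q →
    ∀ t ∈ Set.Icc (0 : ℝ) (dist p q), Metric.infDist (γ t) Z ≤ C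

end Defs

set_option maxHeartbeats 1000000

section AuxChain

variable {X : Type*} [MetricSpace X]


/-- Variation bound for a function Lipschitz-type bounded on an interval. -/
lemma evar_le_of_forall_dist_le {f : ℝ → X} {a b C : ℝ}
    (h : ∀ s ∈ Set.Icc a b, ∀ t ∈ Set.Icc a b, s ≤ t → dist (f s) (f t) ≤ C * (t - s))
    (hab : a ≤ b) :
    eVariationOn f (Set.Icc a b) ≤ ENNReal.ofReal (C * (b - a)) := by
  have hC : 0 ≤ C * (b - a) := by
    rcases eq_or_lt_of_le hab with h' | h'
    · subst h'; simp
    · have := h a ⟨le_rfl, hab⟩ b ⟨hab, le_rfl⟩ hab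
      nlinarith [dist_nonneg (x := f a) (y := f b)]
  apply iSup_le
  rintro ⟨n, ⟨u, hu, us⟩⟩
  have hterm : ∀ i, 0 ≤ C * (u (i+1) - u i) := by
    intro i
    have h1 := h _ (us i) _ (us (i+1)) (hu (Nat.le_succ i))
    nlinarith [dist_nonneg (x := f (u i)) (y := f (u (i+1)))]
  calc ∑ i ∈ Finset.range n, edist (f (u (i+1))) (f (u i))
      ≤ ∑ i ∈ Finset.range n, ENNReal.ofReal (C * (u (i+1) - u i)) := by
        apply Finset.sum_le_sum
        intro i _
        rw [edist_dist, dist_comm]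
        exact ENNReal.ofReal_le_ofReal (h _ (us i) _ (us (i+1)) (hu (Nat.le_succ i)))
    _ = ENNReal.ofReal (∑ i ∈ Finset.range n, C * (u (i+1) - u i)) := by
        rw [ENNReal.ofReal_sum_of_nonneg (fun i _ => hterm i)]
    _ ≤ ENNReal.ofReal (C * (b - a)) := by
        apply ENNReal.ofReal_le_ofReal
        have : ∑ i ∈ Finset.range n, C * (u (i+1) - u i) = C * (u n - u 0) := by
          rw [← Finset.mul_sum, Finset.sum_range_sub (fun i => u i)]
        rw [this]
        rcases le_or_gt C 0 with hC0 | hC0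
        · have h0n : u 0 ≤ u n := hu (Nat.zero_le n)
          nlinarith [(us 0).1, (us 0).2, (us n).1, (us n).2]
        · nlinarith [(us 0).1, (us n).2]

/-- Glue piecewise Lipschitz-type bounds on `[i,i+1]`, `i < N`, to a bound on `[0,N]`. -/
lemma piecewise_dist_glue {f : ℝ → X} {C : ℝ} (hC : 0 ≤ C) :
    ∀ N : ℕ, (∀ i, i < N → ∀ s ∈ Set.Icc (i:ℝ) (i+1), ∀ t ∈ Set.Icc (i:ℝ) (i+1),
      dist (f s) (f t) ≤ C * |s - t|) →
    ∀ s ∈ Set.Icc (0:ℝ) (N:ℝ), ∀ t ∈ Set.Icc (0:ℝ) (N:ℝ), s ≤ t →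
      dist (f s) (f t) ≤ C * (t - s) := by
  intro N
  induction N with
  | zero =>
    intro _ s hs t ht hst
    have hs0 : s = 0 := le_antisymm (by exact_mod_cast hs.2) hs.1
    have ht0 : t = 0 := le_antisymm (by exact_mod_cast ht.2) ht.1
    subst hs0; subst ht0; simp
  | succ N ih =>
    intro h s hs t ht hst
    have hN : ∀ i, i < N → ∀ s ∈ Set.Icc (i:ℝ) (i+1), ∀ t ∈ Set.Icc (i:ℝ) (i+1),
        dist (f s) (f t) ≤ C * |s - t| := fun i hi => h i (by omega)
    have hcast : ((N+1:ℕ):ℝ) = (N:ℝ) + 1 := by push_cast; ring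
    by_cases h1 : t ≤ (N:ℝ)
    · exact ih hN s ⟨hs.1, hst.trans h1⟩ t ⟨ht.1, h1⟩ hst
    · push_neg at h1
      have ht' : t ∈ Set.Icc (N:ℝ) ((N:ℝ)+1) := ⟨h1.le, by rw [← hcast]; exact ht.2⟩
      by_cases h2 : (N:ℝ) ≤ s
      · have := h N (Nat.lt_succ_self N) s ⟨h2, by rw [← hcast]; exact hs.2⟩ t ht'
        calc dist (f s) (f t) ≤ C * |s - t| := this
          _ = C * (t - s) := by rw [abs_sub_comm, abs_of_nonneg (by linarith)]
      · push_neg at h2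
        have d1 := ih hN s ⟨hs.1, h2.le⟩ (N:ℝ) ⟨Nat.cast_nonneg N, le_rfl⟩ h2.le
        have d2 := h N (Nat.lt_succ_self N) (N:ℝ) ⟨le_rfl, by linarith⟩ t ht'
        have : dist (f s) (f t) ≤ dist (f s) (f (N:ℝ)) + dist (f (N:ℝ)) (f t) :=
          dist_triangle _ _ _
        have e2 : C * |(N:ℝ) - t| = C * (t - (N:ℝ)) := by
          rw [abs_sub_comm, abs_of_nonneg (by linarith)]
        rw [e2] at d2
        linarith

/-- Glue per-piece variation bounds. -/
lemma evar_glue {f : ℝ → X} (d : ℕ → ℝ) (hd : ∀ i, 0 ≤ d i) :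
    ∀ N : ℕ, (∀ i, i < N → eVariationOn f (Set.Icc (i:ℝ) ((i:ℝ)+1)) ≤ ENNReal.ofReal (d i)) →
    eVariationOn f (Set.Icc (0:ℝ) (N:ℝ)) ≤ ENNReal.ofReal (∑ i ∈ Finset.range N, d i) := by
  intro N
  induction N with
  | zero =>
    intro _
    simp only [Nat.cast_zero, Set.Icc_self, Finset.range_zero, Finset.sum_empty]
    rw [eVariationOn.subsingleton f (Set.subsingleton_singleton)]
    simp
  | succ N ih =>
    intro h
    have hcast : ((N+1:ℕ):ℝ) = (N:ℝ) + 1 := by push_cast; ring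
    have h0N : (0:ℝ) ≤ (N:ℝ) := Nat.cast_nonneg N
    have key := eVariationOn.Icc_add_Icc f (s := Set.Icc (0:ℝ) ((N:ℝ)+1)) h0N
      (by linarith : (N:ℝ) ≤ (N:ℝ)+1) ⟨h0N, by linarith⟩
    have e1 : Set.Icc (0:ℝ) ((N:ℝ)+1) ∩ Set.Icc (0:ℝ) (N:ℝ) = Set.Icc (0:ℝ) (N:ℝ) :=
      Set.inter_eq_self_of_subset_right (Set.Icc_subset_Icc le_rfl (by linarith))
    have e2 : Set.Icc (0:ℝ) ((N:ℝ)+1) ∩ Set.Icc (N:ℝ) ((N:ℝ)+1) = Set.Icc (N:ℝ) ((N:ℝ)+1) :=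
      Set.inter_eq_self_of_subset_right (Set.Icc_subset_Icc h0N le_rfl)
    have e3 : Set.Icc (0:ℝ) ((N:ℝ)+1) ∩ Set.Icc (0:ℝ) ((N:ℝ)+1) = Set.Icc (0:ℝ) ((N:ℝ)+1) :=
      Set.inter_self _
    rw [e1, e2, e3] at key
    rw [hcast, ← key, Finset.sum_range_succ,
      ENNReal.ofReal_add (Finset.sum_nonneg (fun i _ => hd i)) (hd N)]
    exact add_le_add (ih (fun i hi => h i (by omega))) (h N (Nat.lt_succ_self N))

/-- A continuous piecewise-geodesic chain through the points `p 0, …, p N`. -/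
lemma exists_chain (hX : IsGeodesicSpace X) (p : ℕ → X) (N : ℕ) (hN : 1 ≤ N) :
    ∃ α : ℝ → X, α 0 = p 0 ∧ α (N:ℝ) = p N ∧ ContinuousOn α (Set.Icc (0:ℝ) (N:ℝ)) ∧
      eVariationOn α (Set.Icc (0:ℝ) (N:ℝ)) ≤
        ENNReal.ofReal (∑ i ∈ Finset.range N, dist (p i) (p (i+1))) ∧
      ∀ s ∈ Set.Icc (0:ℝ) (N:ℝ), ∃ i, i < N ∧
        dist (α s) (p i) ≤ dist (p i) (p (i+1)) ∧
        dist (α s) (p (i+1)) ≤ dist (p i) (p (i+1)) := by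
  choose g hg using fun i => hX (p i) (p (i+1))
  set d : ℕ → ℝ := fun i => dist (p i) (p (i+1)) with hd
  have hd0 : ∀ i, 0 ≤ d i := fun i => dist_nonneg
  set α : ℝ → X := fun s => g ⌊s⌋₊ ((s - (⌊s⌋₊ : ℝ)) * d ⌊s⌋₊) with hα
  -- identification on each piece
  have key : ∀ i : ℕ, ∀ s ∈ Set.Icc (i:ℝ) ((i:ℝ)+1), α s = g i ((s - (i:ℝ)) * d i) := by
    intro i s hs
    rcases lt_or_eq_of_le hs.2 with h | h
    · have hfl : ⌊s⌋₊ = i := by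
        rw [Nat.floor_eq_iff (le_trans (Nat.cast_nonneg i) hs.1)]
        exact ⟨hs.1, by push_cast; linarith⟩
      simp only [hα, hfl]
    · have hs1 : s = ((i+1:ℕ):ℝ) := by push_cast; linarith
      have hfl : ⌊s⌋₊ = i + 1 := by rw [hs1, Nat.floor_natCast]
      have e1 : α s = g (i+1) ((s - ((i+1:ℕ):ℝ)) * d (i+1)) := by
        show g ⌊s⌋₊ ((s - (⌊s⌋₊:ℝ)) * d ⌊s⌋₊) = _
        rw [hfl]
      rw [e1, hs1, sub_self, zero_mul, (hg (i+1)).1]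
      have e3 : (((i+1:ℕ)):ℝ) - (i:ℝ) = 1 := by push_cast; ring
      rw [e3, one_mul]
      exact ((hg i).2.1).symm
  have mem_seg : ∀ i : ℕ, ∀ s ∈ Set.Icc (i:ℝ) ((i:ℝ)+1),
      (s - (i:ℝ)) * d i ∈ Set.Icc (0:ℝ) (d i) := by
    intro i s hs
    constructor
    · have : (0:ℝ) ≤ s - i := by linarith [hs.1]
      positivity
    · nlinarith [hs.1, hs.2, hd0 i]
  -- dist formula on pieces
  have piece : ∀ i : ℕ, ∀ s ∈ Set.Icc (i:ℝ) ((i:ℝ)+1), ∀ t ∈ Set.Icc (i:ℝ) ((i:ℝ)+1),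
      dist (α s) (α t) = d i * |s - t| := by
    intro i s hs t ht
    rw [key i s hs, key i t ht, (hg i).2.2 _ (mem_seg i s hs) _ (mem_seg i t ht)]
    rw [show (s - (i:ℝ)) * d i - (t - (i:ℝ)) * d i = (s - t) * d i by ring,
      abs_mul, abs_of_nonneg (hd0 i)]
    ring
  -- endpoints
  have hα0 : α 0 = p 0 := by
    have h0 := key 0 0 (by norm_num)
    rw [h0]
    norm_num [(hg 0).1]
  have hαN : α (N:ℝ) = p N := by
    have hfl : ⌊(N:ℝ)⌋₊ = N := Nat.floor_natCast N
    simp only [hα, hfl, sub_self, zero_mul]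
    exact (hg N).1
  -- global Lipschitz-type bound
  set C : ℝ := ∑ i ∈ Finset.range N, d i with hC
  have hC0 : 0 ≤ C := Finset.sum_nonneg (fun i _ => hd0 i)
  have hdC : ∀ i, i < N → d i ≤ C :=
    fun i hi => Finset.single_le_sum (f := d) (fun j _ => hd0 j) (Finset.mem_range.mpr hi)
  have hglue := piecewise_dist_glue hC0 N (fun i hi s hs t ht => by
    rw [piece i s hs t ht]
    exact mul_le_mul_of_nonneg_right (hdC i hi) (abs_nonneg _))
  have hcont : ContinuousOn α (Set.Icc (0:ℝ) (N:ℝ)) := by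
    have : LipschitzOnWith C.toNNReal α (Set.Icc (0:ℝ) (N:ℝ)) := by
      apply LipschitzOnWith.of_dist_le_mul
      intro x hx y hy
      rcases le_total x y with hxy | hxy
      · have h1 := hglue x hx y hy hxy
        have h2 : dist x y = y - x := by
          rw [Real.dist_eq, abs_of_nonpos (by linarith), neg_sub]
        rw [Real.coe_toNNReal C hC0, h2]
        exact h1
      · have h1 := hglue y hy x hx hxy
        have h2 : dist x y = x - y := by rw [Real.dist_eq, abs_of_nonneg (by linarith)]
        rw [dist_comm, Real.coe_toNNReal C hC0, h2]
        exact h1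
    exact this.continuousOn
  refine ⟨α, hα0, hαN, hcont, ?_, ?_⟩
  · apply evar_glue d hd0 N
    intro i hi
    have := evar_le_of_forall_dist_le (f := α) (a := (i:ℝ)) (b := (i:ℝ)+1) (C := d i)
      (fun s hs t ht hst => by
        rw [piece i s hs t ht, abs_sub_comm, abs_of_nonneg (by linarith)]) (by linarith)
    simpa using this
  · intro s hs
    have hsN : ⌊s⌋₊ ≤ N := by
      have := Nat.floor_le_floor (R := ℝ) hs.2
      rwa [Nat.floor_natCast] at this
    by_cases hcase : ⌊s⌋₊ < N
    · have hsmem : s ∈ Set.Icc ((⌊s⌋₊:ℕ):ℝ) (((⌊s⌋₊:ℕ):ℝ)+1) :=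
        ⟨Nat.floor_le hs.1, (Nat.lt_floor_add_one s).le⟩
      have e := key ⌊s⌋₊ s hsmem
      refine ⟨⌊s⌋₊, hcase, ?_, ?_⟩
      · have e0 : dist (α s) (p ⌊s⌋₊) = (s - (⌊s⌋₊:ℝ)) * d ⌊s⌋₊ := by
          conv_lhs => rw [e, ← (hg ⌊s⌋₊).1]
          rw [(hg ⌊s⌋₊).2.2 _ (mem_seg _ s hsmem) 0 ⟨le_rfl, hd0 _⟩, sub_zero,
            abs_of_nonneg (mem_seg _ s hsmem).1]
        show dist (α s) (p ⌊s⌋₊) ≤ d ⌊s⌋₊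
        rw [e0]
        exact (mem_seg _ s hsmem).2
      · have e0 : dist (α s) (p (⌊s⌋₊+1)) = d ⌊s⌋₊ - (s - (⌊s⌋₊:ℝ)) * d ⌊s⌋₊ := by
          conv_lhs => rw [e, ← (hg ⌊s⌋₊).2.1]
          rw [(hg ⌊s⌋₊).2.2 _ (mem_seg _ s hsmem) _ ⟨hd0 _, le_rfl⟩,
            abs_of_nonpos (by linarith [(mem_seg _ s hsmem).2]), neg_sub]
        show dist (α s) (p (⌊s⌋₊+1)) ≤ d ⌊s⌋₊
        rw [e0]
        linarith [(mem_seg _ s hsmem).1]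
    · -- ⌊s⌋₊ = N, so s = N
      have hflN : ⌊s⌋₊ = N := le_antisymm hsN (not_lt.mp hcase)
      have hsN' : ((N:ℕ):ℝ) ≤ s := by
        rw [← hflN]; exact Nat.floor_le hs.1
      have hseq : s = (N:ℝ) := le_antisymm hs.2 hsN'
      refine ⟨N-1, by omega, ?_, ?_⟩
      · rw [hseq, hαN]
        have : N - 1 + 1 = N := by omega
        rw [this, dist_comm]
      · rw [hseq, hαN]
        have : N - 1 + 1 = N := by omega
        rw [this, dist_self]
        exact dist_nonneg

end AuxChain


/-- In a geodesic metric space, a closed unbounded recurrent subset is Morse. -/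
theorem recurrent_implies_morse
    {X : Type*} [MetricSpace X] (hX : IsGeodesicSpace X)
    (Z : Set X) (hZclosed : IsClosed Z) (hZunbdd : ¬ Bornology.IsBounded Z)
    (hrec : IsRecurrent Z) :
    IsMorse Z := by
  classical
  obtain ⟨ρ, hρ⟩ := hrec
  intro L hL A hA
  have hL0 : (0:ℝ) < L := by linarith
  set c : ℝ := L + A with hc_def
  have hc1 : (1:ℝ) ≤ c := by simp only [hc_def]; linarith
  have hc0 : (0:ℝ) ≤ c := by linarith
  set q₀ : ℝ := 2*c*L + 1 with hq₀_def
  have hq₀1 : (1:ℝ) ≤ q₀ := by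
    have h1 : (0:ℝ) ≤ 2*c*L := by positivity
    simp only [hq₀_def]; linarith
  set ρ₀ : ℝ := max (ρ q₀) 0 with hρ₀_def
  have hρ₀0 : (0:ℝ) ≤ ρ₀ := le_max_right _ _
  set r : ℝ := ρ₀ + 2*c + 1 with hr_def
  have hr0 : (0:ℝ) ≤ r := by simp only [hr_def]; linarith
  set K : ℝ := 2*(r+1) + 2*c*L*(2*(r+1)+A) with hK_def
  set dmin : ℝ := max K (3*(ρ₀ + r + c + 2)) with hdmin_def
  have hdmin0 : (0:ℝ) ≤ dmin := le_trans (by linarith) (le_max_right _ _)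
  have hdminK : K ≤ dmin := le_max_left _ _
  have hdmin3 : 3*(ρ₀ + r + c + 2) ≤ dmin := le_max_right _ _
  set M : ℝ := c + r + A + L^2*(A + 2*r + 2 + dmin) with hM_def
  have hsq : (0:ℝ) ≤ L^2*(A + 2*r + 2 + dmin) :=
    mul_nonneg (sq_nonneg L) (by linarith)
  have hMc : c ≤ M := by simp only [hM_def]; linarith
  refine ⟨M, ?_⟩
  intro a b γ hqg hza hzb s₀ hs₀
  by_contra hcon
  push_neg at hcon
  set D : ℝ := Metric.infDist (γ s₀) Z with hD_def
  have hab : a ≤ b := hqg.1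
  have hZne : Z.Nonempty := ⟨γ a, hza⟩
  -- trivial short case
  by_cases hlen : b - a < 1
  · have h1 : D ≤ Metric.infDist (γ a) Z + dist (γ s₀) (γ a) :=
      Metric.infDist_le_infDist_add_dist
    have h2 : Metric.infDist (γ a) Z = 0 := Metric.infDist_zero_of_mem hza
    have h3 := (hqg.2 s₀ hs₀ a ⟨le_rfl, hab⟩).2
    have h4 : |s₀ - a| ≤ b - a := by
      rw [abs_of_nonneg (by linarith [hs₀.1])]; linarith [hs₀.2]
    have h5 : L * |s₀ - a| ≤ L * (b - a) := by
      exact mul_le_mul_of_nonneg_left h4 (le_of_lt hL0)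
    have h6 : L * (b - a) ≤ L * 1 := mul_le_mul_of_nonneg_left (by linarith) (le_of_lt hL0)
    have : D ≤ c := by simp only [hc_def]; linarith
    linarith
  push_neg at hlen
  -- sampling grid
  set n : ℕ := ⌈b - a⌉₊ with hn_def
  have hba0 : (0:ℝ) < b - a := by linarith
  have hn1 : 1 ≤ n := by
    rw [hn_def]; exact Nat.one_le_iff_ne_zero.mpr (by positivity)
  have hnR : (0:ℝ) < (n:ℝ) := by exact_mod_cast Nat.pos_of_ne_zero (by omega)
  have hnge : b - a ≤ (n:ℝ) := Nat.le_ceil _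
  have hnlt : (n:ℝ) < b - a + 1 := Nat.ceil_lt_add_one (le_of_lt hba0)
  set h : ℝ := (b - a)/(n:ℝ) with hh_def
  have hh0 : 0 < h := by positivity
  have hnh : (n:ℝ) * h = b - a := by rw [hh_def]; field_simp [hnR.ne']
  have hh1 : h ≤ 1 := by rw [hh_def, div_le_one hnR]; linarith
  have hh2 : 1/2 ≤ h := by
    rw [hh_def, le_div_iff₀ hnR]; linarith only [hnlt, hlen]
  set t : ℕ → ℝ := fun i => a + (i:ℝ) * h with ht_def
  have ht0 : t 0 = a := by simp [ht_def]
  have htn : t n = b := by simp only [ht_def]; linarith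
  have htmono : ∀ i j : ℕ, i ≤ j → t i ≤ t j := by
    intro i j hij
    simp only [ht_def]
    have h1 : (i:ℝ) ≤ (j:ℝ) := by exact_mod_cast hij
    have h2 : (i:ℝ)*h ≤ (j:ℝ)*h := mul_le_mul_of_nonneg_right h1 (le_of_lt hh0)
    linarith only [h2]
  have ht_mem : ∀ i : ℕ, i ≤ n → t i ∈ Set.Icc a b := by
    intro i hi
    refine ⟨by simp only [ht_def]; exact le_add_of_nonneg_right (by positivity), ?_⟩
    have := htmono i n hi
    rwa [htn] at this
  have htdiff : ∀ i j : ℕ, t j - t i = ((j:ℝ) - (i:ℝ))*h := by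
    intro i j; simp only [ht_def]; ring
  -- quasigeodesic bounds between samples
  have hub : ∀ i j : ℕ, i ≤ j → j ≤ n → dist (γ (t i)) (γ (t j)) ≤ L*(t j - t i) + A := by
    intro i j hij hjn
    have h1 := (hqg.2 (t i) (ht_mem i (hij.trans hjn)) (t j) (ht_mem j hjn)).2
    rwa [abs_sub_comm, abs_of_nonneg (by linarith [htmono i j hij])] at h1
  have hlb : ∀ i j : ℕ, i ≤ j → j ≤ n → (t j - t i)/L - A ≤ dist (γ (t i)) (γ (t j)) := by
    intro i j hij hjn
    have h1 := (hqg.2 (t i) (ht_mem i (hij.trans hjn)) (t j) (ht_mem j hjn)).1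
    rwa [abs_sub_comm, abs_of_nonneg (by linarith [htmono i j hij])] at h1
  have hdist_consec : ∀ k : ℕ, k + 1 ≤ n → dist (γ (t k)) (γ (t (k+1))) ≤ c := by
    intro k hk
    have h1 := hub k (k+1) (Nat.le_succ k) hk
    have h2 : t (k+1) - t k = h := by rw [htdiff]; push_cast; ring
    rw [h2] at h1
    have : L * h ≤ L * 1 := mul_le_mul_of_nonneg_left hh1 (le_of_lt hL0)
    simp only [hc_def]; linarith
  -- the index near s₀
  set i₀ : ℕ := ⌊(s₀ - a)/h⌋₊ with hi₀_def
  have hs0a : 0 ≤ (s₀ - a)/h := div_nonneg (by linarith [hs₀.1]) (le_of_lt hh0)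
  have hi₀n : i₀ ≤ n := by
    rw [hi₀_def]
    have h1 : (s₀ - a)/h ≤ (n:ℝ) := by
      rw [div_le_iff₀ hh0]; linarith only [hnh, hs₀.2]
    calc ⌊(s₀ - a)/h⌋₊ ≤ ⌊(n:ℝ)⌋₊ := Nat.floor_le_floor h1
      _ = n := Nat.floor_natCast n
  have hti₀ : |s₀ - t i₀| ≤ h := by
    have h1 : (i₀:ℝ) ≤ (s₀ - a)/h := Nat.floor_le hs0a
    have h2 : (s₀ - a)/h < (i₀:ℝ) + 1 := Nat.lt_floor_add_one _
    rw [le_div_iff₀ hh0] at h1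
    rw [div_lt_iff₀ hh0] at h2
    rw [add_mul, one_mul] at h2
    rw [abs_of_nonneg (by simp only [ht_def]; linarith only [h1])]
    simp only [ht_def]; linarith only [h2]
  have hds₀ : dist (γ s₀) (γ (t i₀)) ≤ c := by
    have h1 := (hqg.2 s₀ hs₀ (t i₀) (ht_mem i₀ hi₀n)).2
    have h2 : L * |s₀ - t i₀| ≤ L * 1 :=
      mul_le_mul_of_nonneg_left (hti₀.trans hh1) (le_of_lt hL0)
    simp only [hc_def]; linarith
  have hDi₀ : D - c ≤ Metric.infDist (γ (t i₀)) Z := by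
    have := Metric.infDist_le_infDist_add_dist (x := γ s₀) (y := γ (t i₀)) (s := Z)
    simp only [← hD_def] at this
    linarith
  -- excursion indices
  set P : ℕ → Prop := fun i => Metric.infDist (γ (t i)) Z ≤ r with hPdef
  have hP0 : P 0 := by
    show Metric.infDist (γ (t 0)) Z ≤ r
    rw [ht0, Metric.infDist_zero_of_mem hza]; linarith
  have hPn : P n := by
    show Metric.infDist (γ (t n)) Z ≤ r
    rw [htn, Metric.infDist_zero_of_mem hzb]; linarith
  have hPi₀ : ¬ P i₀ := by
    show ¬ Metric.infDist (γ (t i₀)) Z ≤ r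
    push_neg
    calc r < D - c := by linarith [hMc, hcon, hsq, hr0, (by simp only [hM_def]; linarith : r + c ≤ M)]
      _ ≤ _ := hDi₀
  set i₁ : ℕ := Nat.findGreatest P i₀ with hi₁_def
  have hP1 : P i₁ := Nat.findGreatest_spec (Nat.zero_le i₀) hP0
  have hi₁le : i₁ ≤ i₀ := Nat.findGreatest_le i₀
  have hi₁i₀ : i₁ < i₀ := lt_of_le_of_ne hi₁le (fun he => hPi₀ (he ▸ hP1))
  have hmax : ∀ i : ℕ, i₁ < i → i ≤ i₀ → ¬ P i :=
    fun i h1 h2 => Nat.findGreatest_is_greatest h1 h2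
  have hex : ∃ j : ℕ, P (i₀ + j) := ⟨n - i₀, by rw [Nat.add_sub_cancel' hi₀n]; exact hPn⟩
  set i₂ : ℕ := i₀ + Nat.find hex with hi₂_def
  have hP2 : P i₂ := Nat.find_spec hex
  have hj2le : Nat.find hex ≤ n - i₀ :=
    Nat.find_min' hex (by rw [Nat.add_sub_cancel' hi₀n]; exact hPn)
  have hi₂n : i₂ ≤ n := by omega
  have hmin : ∀ i : ℕ, i₀ ≤ i → i < i₂ → ¬ P i := by
    intro i hle hlt
    have h1 : i - i₀ < Nat.find hex := by omega
    have h2 := Nat.find_min hex h1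
    rwa [Nat.add_sub_cancel' hle] at h2
  have hi₀i₂ : i₀ < i₂ := by
    rcases Nat.eq_zero_or_pos (Nat.find hex) with h0 | h0
    · exfalso
      apply hPi₀
      have : i₂ = i₀ := by omega
      rwa [this] at hP2
    · omega
  set m : ℕ := i₂ - i₁ with hm_def
  have hm2 : 2 ≤ m := by omega
  have hi₁i₂ : i₁ ≤ i₂ := by omega
  -- endpoints on Z
  obtain ⟨z₁, hz₁Z, hz₁d⟩ : ∃ y ∈ Z, dist (γ (t i₁)) y < r + 1 :=
    (Metric.infDist_lt_iff hZne).mp (lt_of_le_of_lt hP1 (by linarith))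
  obtain ⟨z₂, hz₂Z, hz₂d⟩ : ∃ y ∈ Z, dist (γ (t i₂)) y < r + 1 :=
    (Metric.infDist_lt_iff hZne).mp (lt_of_le_of_lt hP2 (by linarith))
  set dd : ℝ := dist z₁ z₂ with hdd_def
  -- distance lower bound on dd
  have hF1 : D - c - r ≤ L*(t i₀ - t i₁) + A := by
    have h1 : Metric.infDist (γ (t i₀)) Z ≤ Metric.infDist (γ (t i₁)) Z
        + dist (γ (t i₀)) (γ (t i₁)) := Metric.infDist_le_infDist_add_dist
    have h2 := hub i₁ i₀ (le_of_lt hi₁i₀) hi₀n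
    rw [dist_comm] at h2
    have h3 : Metric.infDist (γ (t i₁)) Z ≤ r := hP1
    linarith [hDi₀]
  have hF2 : D - c - r ≤ L*(t i₂ - t i₀) + A := by
    have h1 : Metric.infDist (γ (t i₀)) Z ≤ Metric.infDist (γ (t i₂)) Z
        + dist (γ (t i₀)) (γ (t i₂)) := Metric.infDist_le_infDist_add_dist
    have h2 := hub i₀ i₂ (le_of_lt hi₀i₂) hi₂n
    have h3 : Metric.infDist (γ (t i₂)) Z ≤ r := hP2
    linarith [hDi₀]
  set dist12 : ℝ := dist (γ (t i₁)) (γ (t i₂)) with hdist12_def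
  have hF3 : t i₂ - t i₁ ≤ L*dist12 + L*A := by
    have h1 := hlb i₁ i₂ hi₁i₂ hi₂n
    rw [← hdist12_def] at h1
    have h2 : (t i₂ - t i₁)/L ≤ dist12 + A := by linarith only [h1]
    rw [div_le_iff₀ hL0] at h2
    linarith only [h2]
  have hF4 : dist12 ≤ dd + 2*(r+1) := by
    have h1 : dist12 ≤ dist (γ (t i₁)) z₁ + dist z₁ z₂ + dist z₂ (γ (t i₂)) := by
      rw [hdist12_def]
      calc dist (γ (t i₁)) (γ (t i₂)) ≤ dist (γ (t i₁)) z₁ + dist z₁ (γ (t i₂)) :=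
            dist_triangle _ _ _
        _ ≤ dist (γ (t i₁)) z₁ + (dist z₁ z₂ + dist z₂ (γ (t i₂))) := by
            linarith [dist_triangle z₁ z₂ (γ (t i₂))]
        _ = _ := by ring
    rw [dist_comm z₂ (γ (t i₂))] at h1
    rw [← hdd_def] at h1
    linarith [hz₁d, hz₂d]
  have hG : 2*(D - c - r - A) ≤ L*(t i₂ - t i₁) := by linarith only [hF1, hF2]
  have hG2 : L*(t i₂ - t i₁) ≤ L*(L*dist12 + L*A) :=
    mul_le_mul_of_nonneg_left hF3 (le_of_lt hL0)
  have hL2 : (0:ℝ) < L^2 := by positivity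
  have hG3 : L^2*(A + 4*r + 4 + 2*dmin) ≤ L^2*dist12 := by
    linarith only [hG, hG2, hcon, hM_def]
  have hG4 : A + 4*r + 4 + 2*dmin ≤ dist12 := le_of_mul_le_mul_left (by linarith) hL2
  have hddmin : dmin ≤ dd := by linarith only [hF4, hG4, hdmin0, hr0, hA]
  have hdd0 : (0:ℝ) ≤ dd := dist_nonneg
  -- the chain of points
  set p : ℕ → X := fun j => if j = 0 then z₁ else if j ≤ m + 1 then γ (t (i₁ + j - 1)) else z₂
    with hp_def
  have hp0 : p 0 = z₁ := by simp [hp_def]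
  have hpN : p (m+2) = z₂ := by
    simp only [hp_def]
    rw [if_neg (by omega), if_neg (by omega)]
  have hpj : ∀ j : ℕ, 1 ≤ j → j ≤ m + 1 → p j = γ (t (i₁ + j - 1)) := by
    intro j h1 h2
    simp only [hp_def]
    rw [if_neg (by omega), if_pos h2]
  have hd0le : dist (p 0) (p 1) ≤ r + 1 := by
    rw [hp0, hpj 1 le_rfl (by omega)]
    have e : i₁ + 1 - 1 = i₁ := by omega
    rw [e, dist_comm]
    exact hz₁d.le
  have hdNle : dist (p (m+1)) (p (m+2)) ≤ r + 1 := by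
    rw [hpN, hpj (m+1) (by omega) (by omega)]
    have e : i₁ + (m+1) - 1 = i₂ := by omega
    rw [e]
    exact hz₂d.le
  have hmid : ∀ j : ℕ, 1 ≤ j → j ≤ m → dist (p j) (p (j+1)) ≤ c := by
    intro j h1 h2
    rw [hpj j h1 (by omega), hpj (j+1) (by omega) (by omega)]
    have e1 : i₁ + (j+1) - 1 = (i₁ + j - 1) + 1 := by omega
    rw [e1]
    exact hdist_consec _ (by omega)
  -- the sum of distances
  have hm_le : (m:ℝ) ≤ 2*(t i₂ - t i₁) := by
    have e : t i₂ - t i₁ = (m:ℝ)*h := by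
      rw [htdiff]
      congr 1
      rw [hm_def]
      push_cast [Nat.cast_sub hi₁i₂]
      ring
    have h1 : (m:ℝ)*(1/2) ≤ (m:ℝ)*h := mul_le_mul_of_nonneg_left hh2 (Nat.cast_nonneg m)
    rw [e]; linarith
  have hm' : (m:ℝ) ≤ 2*L*(dd + 2*(r+1) + A) := by
    have h1 : L*dist12 ≤ L*(dd + 2*(r+1)) := mul_le_mul_of_nonneg_left hF4 (le_of_lt hL0)
    linarith only [hm_le, hF3, h1]
  have hsum : ∑ i ∈ Finset.range (m+2), dist (p i) (p (i+1)) ≤ q₀ * dd := by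
    have e1 : ∑ i ∈ Finset.range (m+2), dist (p i) (p (i+1))
        = (∑ i ∈ Finset.range (m+1), dist (p i) (p (i+1))) + dist (p (m+1)) (p (m+2)) :=
      Finset.sum_range_succ _ _
    have e2 : ∑ i ∈ Finset.range (m+1), dist (p i) (p (i+1))
        = (∑ i ∈ Finset.range m, dist (p (i+1)) (p (i+2))) + dist (p 0) (p 1) :=
      Finset.sum_range_succ' _ _
    have e3 : ∑ i ∈ Finset.range m, dist (p (i+1)) (p (i+2)) ≤ (m:ℝ)*c := by
      calc ∑ i ∈ Finset.range m, dist (p (i+1)) (p (i+2))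
          ≤ ∑ _i ∈ Finset.range m, c := by
            apply Finset.sum_le_sum
            intro i hi
            have him := Finset.mem_range.mp hi
            exact hmid (i+1) (by omega) (by omega)
        _ = (m:ℝ)*c := by rw [Finset.sum_const, Finset.card_range, nsmul_eq_mul]
    have hmc : (m:ℝ)*c ≤ 2*L*(dd + 2*(r+1) + A)*c := mul_le_mul_of_nonneg_right hm' hc0
    have hKdd : K ≤ dd := le_trans hdminK hddmin
    rw [e1, e2]
    simp only [hq₀_def]
    linarith only [hd0le, hdNle, e3, hmc, hKdd, hK_def]
  -- build the chain curve
  obtain ⟨α, hα0, hαN, hαcont, hαvar, hαloc⟩ := exists_chain hX p (m+2) (by omega)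
  have hvar' : eVariationOn α (Set.Icc (0:ℝ) ((m+2:ℕ):ℝ))
      ≤ ENNReal.ofReal (q₀ * dist (α 0) (α ((m+2:ℕ):ℝ))) := by
    rw [hα0, hαN, hp0, hpN, ← hdd_def]
    exact hαvar.trans (ENNReal.ofReal_le_ofReal hsum)
  obtain ⟨s, hsmem, hsle⟩ := hρ q₀ hq₀1 0 ((m+2:ℕ):ℝ) (by positivity) α hαcont
    (by rw [hα0, hp0]; exact hz₁Z) (by rw [hαN, hpN]; exact hz₂Z) hvar'
  rw [hα0, hαN, hp0, hpN] at hsle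
  have hslt : EMetric.infEdist (α s) (recRemoved Z z₁ z₂) < ENNReal.ofReal (ρ₀ + 1) := by
    refine lt_of_le_of_lt hsle (lt_of_le_of_lt
      (ENNReal.ofReal_le_ofReal (le_max_left (ρ q₀) 0)) ?_)
    rw [← hρ₀_def]
    exact (ENNReal.ofReal_lt_ofReal_iff (by linarith)).mpr (by linarith)
  obtain ⟨y, hy', hye⟩ := EMetric.infEdist_lt_iff.mp hslt
  have hyd : dist (α s) y < ρ₀ + 1 := by rwa [edist_lt_ofReal] at hye
  obtain ⟨hyZ, hyb⟩ := hy'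
  have hyb1 : dd/3 ≤ dist z₁ y := by
    have h1 : y ∉ Metric.ball z₁ (dist z₁ z₂ / 3) := fun hc => hyb (Or.inl hc)
    rw [Metric.mem_ball, not_lt] at h1
    rw [hdd_def, dist_comm z₁ y]
    exact h1
  have hyb2 : dd/3 ≤ dist z₂ y := by
    have h1 : y ∉ Metric.ball z₂ (dist z₁ z₂ / 3) := fun hc => hyb (Or.inr hc)
    rw [Metric.mem_ball, not_lt] at h1
    rw [hdd_def, dist_comm z₂ y]
    exact h1
  obtain ⟨i, hiN, hdi1, hdi2⟩ := hαloc s hsmem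
  by_cases hcase1 : i ≤ 1
  · -- near z₁
    have hnear : dist (α s) z₁ ≤ r + 1 + c := by
      obtain rfl | rfl : i = 0 ∨ i = 1 := by omega
      · rw [hp0] at hdi1
        have := hdi1.trans hd0le
        linarith
      · have h1 := hdi1.trans (hmid 1 le_rfl (by omega))
        have h2 : dist (p 1) z₁ ≤ r + 1 := by
          rw [hpj 1 le_rfl (by omega)]
          have e : i₁ + 1 - 1 = i₁ := by omega
          rw [e]
          exact hz₁d.le
        calc dist (α s) z₁ ≤ dist (α s) (p 1) + dist (p 1) z₁ := dist_triangle _ _ _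
          _ ≤ _ := by linarith
    have h3 : dd/3 ≤ dist z₁ (α s) + dist (α s) y :=
      le_trans hyb1 (dist_triangle _ _ _)
    rw [dist_comm z₁ (α s)] at h3
    linarith [hdmin3, hddmin]
  by_cases hcase2 : m ≤ i
  · -- near z₂
    have hnear : dist (α s) z₂ ≤ r + 1 + c := by
      obtain rfl | rfl : i = m ∨ i = m + 1 := by omega
      · have h1 := hdi2.trans (hmid m (by omega) le_rfl)
        have h2 : dist (p (m+1)) z₂ ≤ r + 1 := by
          rw [hpj (m+1) (by omega) (by omega)]
          have e : i₁ + (m+1) - 1 = i₂ := by omega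
          rw [e]
          exact hz₂d.le
        calc dist (α s) z₂ ≤ dist (α s) (p (m+1)) + dist (p (m+1)) z₂ := dist_triangle _ _ _
          _ ≤ _ := by linarith
      · have e : m + 1 + 1 = m + 2 := rfl
        rw [e, hpN] at hdi2
        have h2' : dist (p (m+1)) z₂ ≤ r + 1 := by
          rw [hpj (m+1) (by omega) (by omega)]
          have e2 : i₁ + (m+1) - 1 = i₂ := by omega
          rw [e2]
          exact hz₂d.le
        have := hdi2.trans h2'
        linarith
    have h3 : dd/3 ≤ dist z₂ (α s) + dist (α s) y :=
      le_trans hyb2 (dist_triangle _ _ _)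
    rw [dist_comm z₂ (α s)] at h3
    linarith [hdmin3, hddmin]
  · -- middle
    push_neg at hcase1 hcase2
    set k : ℕ := i₁ + i - 1 with hk_def
    have hkgt : i₁ < k := by omega
    have hklt : k < i₂ := by omega
    have hPk : ¬ P k := by
      rcases le_or_gt k i₀ with hk1 | hk1
      · exact hmax k hkgt hk1
      · exact hmin k (le_of_lt hk1) hklt
    have hPk' : r < Metric.infDist (γ (t k)) Z := not_le.mp hPk
    have hpi : p i = γ (t k) := hpj i (by omega) (by omega)
    have hdic : dist (α s) (p i) ≤ c := hdi1.trans (hmid i (by omega) (by omega))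
    have h1 : Metric.infDist (γ (t k)) Z ≤ Metric.infDist (α s) Z + dist (γ (t k)) (α s) :=
      Metric.infDist_le_infDist_add_dist
    have h2 : Metric.infDist (α s) Z ≤ dist (α s) y := Metric.infDist_le_dist_of_mem hyZ
    have hdic' : dist (γ (t k)) (α s) ≤ c := by rw [← hpi, dist_comm]; exact hdic
    have hrc : r = ρ₀ + 2*c + 1 := hr_def
    linarith only [hPk', h1, h2, hdic', hyd, hrc, hc1, hρ₀0]
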